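/- arXiv:1509.09209 — 2 statements merged into one kernel-verified Lean document; each statement's English description precedes it below -/
import Mathlib

section
/- Concatenation of binary strings, realized as the operation x ⊕ y = (x+1)·Q y + R y - 1 on the natural numbers, is associative: for all natural numbers x, y, z, x ⊕ (y ⊕ z) = (x ⊕ y) ⊕ z. -/
def Q (x : ℕ) : ℕ := 2 ^ Nat.log 2 (x + 1)

def R (x : ℕ) : ℕ := (x + 1) - Q x

def cat (x y : ℕ) : ℕ := (x + 1) * Q y + R y - 1

infixl:65 " ⊙ " => cat

lemma Q_le (x : ℕ) : Q x ≤ x + 1 :=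
  Nat.pow_log_le_self 2 (Nat.succ_ne_zero x)

lemma lt_two_Q (x : ℕ) : x + 1 < 2 * Q x := by
  have := Nat.lt_pow_succ_log_self (by norm_num : 1 < 2) (x + 1)
  simpa [Q, pow_succ, mul_comm] using this

lemma Q_pos (x : ℕ) : 0 < Q x := Nat.pow_pos (by norm_num)

lemma R_add (x : ℕ) : Q x + R x = x + 1 := by
  have := Q_le x; unfold R; omega

lemma cat_succ (x y : ℕ) : (x ⊙ y) + 1 = (x + 1) * Q y + R y := by
  have h1 := Q_pos y
  have h2 : 1 ≤ (x + 1) * Q y := Nat.one_le_iff_ne_zero.mpr (by positivity)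
  unfold cat; omega

lemma Q_cat (x y : ℕ) : Q (x ⊙ y) = Q x * Q y := by
  have hs := cat_succ x y
  have hRx : Q x + R x = x + 1 := R_add x
  have hRy : Q y + R y = y + 1 := R_add y
  have hy2 := lt_two_Q y
  have hx2 := lt_two_Q x
  have hQx := Q_pos x
  have hQy := Q_pos y
  have hlow : Q x * Q y ≤ (x ⊙ y) + 1 := by nlinarith
  have hhigh : (x ⊙ y) + 1 < 2 * (Q x * Q y) := by nlinarith
  have hlog : Nat.log 2 ((x ⊙ y) + 1) = Nat.log 2 (x + 1) + Nat.log 2 (y + 1) := by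
    apply Nat.log_eq_of_pow_le_of_lt_pow
    · simpa [pow_add, Q] using hlow
    · calc (x ⊙ y) + 1 < 2 * (Q x * Q y) := hhigh
        _ = 2 ^ (Nat.log 2 (x + 1) + Nat.log 2 (y + 1) + 1) := by
            simp [Q, pow_add, pow_succ]; ring
  simp [Q, hlog, pow_add]

lemma R_cat (x y : ℕ) : R (x ⊙ y) = R x * Q y + R y := by
  have hs := cat_succ x y
  have hRx : Q x + R x = x + 1 := R_add x
  have hq := Q_cat x y
  show (x ⊙ y) + 1 - Q (x ⊙ y) = R x * Q y + R y
  rw [hq, hs]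
  have : (x + 1) * Q y = Q x * Q y + R x * Q y := by rw [← hRx]; ring
  omega

theorem stmt_5 (x y z : ℕ) : x ⊙ (y ⊙ z) = (x ⊙ y) ⊙ z := by
  have h1 : (x ⊙ (y ⊙ z)) + 1 = ((x ⊙ y) ⊙ z) + 1 := by
    rw [cat_succ, cat_succ, Q_cat, R_cat, cat_succ]
    ring
  omega
end

section
/- For every natural number x with x ≠ 0, Q(Chop x) = (Q x) / 2 and R(Chop x) = (R x) / 2, where / denotes floor division. -/
def Chop (x : ℕ) : ℕ := (Q x / 2 + R x / 2) - 1

theorem stmt_15 (x : ℕ) (hx : x ≠ 0) :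
    Q (Chop x) = Q x / 2 ∧ R (Chop x) = R x / 2 := by
  set n := Nat.log 2 (x + 1) with hn
  have hx2 : 2 ≤ x + 1 := by omega
  have hnpos : 0 < n := Nat.log_pos (by norm_num) hx2
  obtain ⟨m, hm⟩ : ∃ m, n = m + 1 := ⟨n - 1, by omega⟩
  have hQ : Q x = 2 ^ (m + 1) := by rw [show Q x = 2 ^ n from rfl, hm]
  have hle : 2 ^ n ≤ x + 1 := Nat.pow_log_le_self 2 (by omega)
  have hlt : x + 1 < 2 ^ (n + 1) := Nat.lt_pow_succ_log_self (by norm_num) _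
  rw [hm] at hle hlt
  have hRlt : R x < 2 ^ (m + 1) := by
    have h2 : 2 ^ (m + 1 + 1) = 2 ^ (m + 1) + 2 ^ (m + 1) := by ring
    have : R x = x + 1 - Q x := rfl
    omega
  have hRdiv : R x / 2 < 2 ^ m := by
    rw [Nat.div_lt_iff_lt_mul (by norm_num)]
    calc R x < 2 ^ (m + 1) := hRlt
    _ = 2 ^ m * 2 := by ring
  have hQdiv : Q x / 2 = 2 ^ m := by
    rw [hQ, pow_succ]; omega
  have hppos : 0 < 2 ^ m := Nat.pow_pos (by norm_num : (0:ℕ) < 2)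
  have hC : Chop x + 1 = 2 ^ m + R x / 2 := by
    unfold Chop; rw [hQdiv]; omega
  have hlog : Nat.log 2 (Chop x + 1) = m := by
    apply Nat.log_eq_of_pow_le_of_lt_pow
    · omega
    · rw [hC]
      have : 2 ^ (m + 1) = 2 ^ m + 2 ^ m := by ring
      omega
  have hQC : Q (Chop x) = 2 ^ m := by unfold Q; rw [hlog]
  refine ⟨by rw [hQC, hQdiv], ?_⟩
  show Chop x + 1 - Q (Chop x) = R x / 2
  rw [hQC, hC]
  omega
end
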